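/- Let P > 0, write p̄ = P/(1+P), and define M_P(r,t) = (1−p̄)^{t+1} · Σ_{k=1}^{r} C(t+r−k, r−k) · p̄^{r−k} for integers r ≥ 1, t ≥ 0. Then for every real v with 0 < v < P, limsup_{r→∞} (1/r) · log M_P(r, ⌊r/v⌋) ≤ −((1+v)/v) · D(v/(1+v) ‖ p̄). -/

import Mathlib

open Filter

/-- The binary Kullback–Leibler divergence `D(q‖p)` (natural logarithms). -/
noncomputable def klBin (q p : ℝ) : ℝ :=
  q * Real.log (q / p) + (1 - q) * Real.log ((1 - q) / (1 - p))

/-- The explicit single-sample MSE `M_P(r,t)` of the linear scheme with SNR `P`. -/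
noncomputable def MP (P : ℝ) (r t : ℕ) : ℝ :=
  (1 - P / (1 + P)) ^ (t + 1) *
    ∑ k ∈ Finset.Icc 1 r, (Nat.choose (t + r - k) (r - k) : ℝ) * (P / (1 + P)) ^ (r - k)

private lemma choose_mul_le_one {q : ℝ} (h0 : 0 < q) (h1 : q < 1) (n k : ℕ) (hk : k ≤ n) :
    (n.choose k : ℝ) * q ^ k * (1 - q) ^ (n - k) ≤ 1 := by
  have h1q : (0:ℝ) ≤ 1 - q := by linarith
  calc (n.choose k : ℝ) * q ^ k * (1 - q) ^ (n - k)
      = q ^ k * (1 - q) ^ (n - k) * (n.choose k : ℝ) := by ring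
    _ ≤ ∑ i ∈ Finset.range (n+1), q ^ i * (1 - q) ^ (n - i) * (n.choose i : ℝ) := by
        apply Finset.single_le_sum (f := fun i => q ^ i * (1 - q) ^ (n - i) * (n.choose i : ℝ))
        · intro i _; positivity
        · exact Finset.mem_range.2 (Nat.lt_succ_of_le hk)
    _ = (q + (1 - q)) ^ n := (add_pow q (1-q) n).symm
    _ = 1 := by norm_num

/-- MSE exponent of Theorem 1. For `P > 0`, `p̄ = P/(1+P)`, and
`0 < v < P`:
`limsup_{r→∞} (1/r)·log M_P(r, ⌊r/v⌋) ≤ −((1+v)/v)·D(v/(1+v) ‖ p̄)`. -/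
theorem stmt4 (P : ℝ) (hP : 0 < P) (v : ℝ) (hv0 : 0 < v) (hvP : v < P) :
    Filter.limsup
        (fun r : ℕ => (1 / (r : ℝ)) * Real.log (MP P r ⌊(r : ℝ) / v⌋₊)) atTop ≤
      -(((1 + v) / v) * klBin (v / (1 + v)) (P / (1 + P))) := by
  have h1P : (0:ℝ) < 1 + P := by linarith
  have h1v : (0:ℝ) < 1 + v := by linarith
  set p : ℝ := P / (1 + P) with hp_def
  set w : ℝ := v / (1 + v) with hw_def
  have hp0 : 0 < p := div_pos hP h1P
  have hp1 : p < 1 := (div_lt_one h1P).2 (by linarith)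
  have hw0 : 0 < w := div_pos hv0 h1v
  have hw1 : w < 1 := (div_lt_one h1v).2 (by linarith)
  have hwp : w < p := by
    rw [hw_def, hp_def, div_lt_div_iff₀ h1v h1P]; nlinarith
  have h1p : (0:ℝ) < 1 - p := by linarith
  clear_value p w
  have h1w : (0:ℝ) < 1 - w := by linarith
  set A : ℝ := Real.log (1 - p) with hA_def
  set B : ℝ := Real.log ((1 - w)⁻¹) with hB_def
  set C : ℝ := Real.log (p / w) with hC_def
  set t : ℕ → ℕ := fun r => ⌊(r : ℝ) / v⌋₊ with ht_def
  -- lower bound on the sum (for positivity and coboundedness)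
  have hsum_ge : ∀ r : ℕ, 1 ≤ r → ∀ s : ℕ,
      (1:ℝ) ≤ ∑ k ∈ Finset.Icc 1 r, (Nat.choose (s + r - k) (r - k) : ℝ) * p ^ (r - k) := by
    intro r hr s
    have := Finset.single_le_sum
      (f := fun k => (Nat.choose (s + r - k) (r - k) : ℝ) * p ^ (r - k))
      (fun i _ => by positivity) (Finset.mem_Icc.2 ⟨hr, le_rfl⟩)
    simpa using this
  have hMP_pos : ∀ r : ℕ, 1 ≤ r → ∀ s : ℕ, 0 < MP P r s := by
    intro r hr s
    rw [MP, ← hp_def]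
    exact mul_pos (by positivity) (lt_of_lt_of_le one_pos (hsum_ge r hr s))
  -- upper bound on MP
  have hMP_le : ∀ r : ℕ, 1 ≤ r → ∀ s : ℕ,
      MP P r s ≤ (r:ℝ) * ((1 - p) ^ (s + 1) * ((p / w) ^ (r - 1) * ((1 - w)⁻¹) ^ s)) := by
    intro r hr s
    have key : ∀ k ∈ Finset.Icc 1 r, (Nat.choose (s + r - k) (r - k) : ℝ) * p ^ (r - k)
        ≤ (p / w) ^ (r - 1) * ((1 - w)⁻¹) ^ s := by
      intro k hk
      obtain ⟨hk1, hkr⟩ := Finset.mem_Icc.1 hk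
      have hn : s + r - k = s + (r - k) := by omega
      set j := r - k with hj_def
      have h1 := choose_mul_le_one hw0 hw1 (s + j) j (Nat.le_add_left _ _)
      rw [show s + j - j = s by omega] at h1
      have hjr : j ≤ r - 1 := by omega
      have hpw1 : (1:ℝ) ≤ p / w := (one_le_div hw0).2 hwp.le
      calc ((s + r - k).choose j : ℝ) * p ^ j
          = (((s + j).choose j : ℝ) * w ^ j * (1 - w) ^ s) * ((p / w) ^ j * ((1 - w)⁻¹) ^ s) := by
            rw [hn, div_pow, inv_pow]
            have hwj : w ^ j ≠ 0 := by positivity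
            have h1ws : (1 - w) ^ s ≠ 0 := by positivity
            field_simp
        _ ≤ 1 * ((p / w) ^ j * ((1 - w)⁻¹) ^ s) :=
            mul_le_mul_of_nonneg_right h1 (by positivity)
        _ = (p / w) ^ j * ((1 - w)⁻¹) ^ s := one_mul _
        _ ≤ (p / w) ^ (r - 1) * ((1 - w)⁻¹) ^ s :=
            mul_le_mul_of_nonneg_right (pow_le_pow_right₀ hpw1 hjr) (by positivity)
    have hsum : ∑ k ∈ Finset.Icc 1 r, (Nat.choose (s + r - k) (r - k) : ℝ) * p ^ (r - k)
        ≤ (r:ℝ) * ((p / w) ^ (r - 1) * ((1 - w)⁻¹) ^ s) := by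
      calc _ ≤ ∑ _k ∈ Finset.Icc 1 r, (p / w) ^ (r - 1) * ((1 - w)⁻¹) ^ s :=
            Finset.sum_le_sum key
        _ = (r:ℝ) * ((p / w) ^ (r - 1) * ((1 - w)⁻¹) ^ s) := by
            rw [Finset.sum_const, Nat.card_Icc]
            simp [nsmul_eq_mul]
    rw [MP, ← hp_def]
    calc (1 - p) ^ (s + 1) * ∑ k ∈ Finset.Icc 1 r, (Nat.choose (s + r - k) (r - k) : ℝ) * p ^ (r - k)
        ≤ (1 - p) ^ (s + 1) * ((r:ℝ) * ((p / w) ^ (r - 1) * ((1 - w)⁻¹) ^ s)) :=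
          mul_le_mul_of_nonneg_left hsum (by positivity)
      _ = (r:ℝ) * ((1 - p) ^ (s + 1) * ((p / w) ^ (r - 1) * ((1 - w)⁻¹) ^ s)) := by ring
  -- the dominating sequence
  set g : ℕ → ℝ := fun r =>
    Real.log r / r + (((t r : ℝ) + 1) / r) * A + ((t r : ℝ) / r) * B + (((r:ℝ) - 1) / r) * C
    with hg_def
  have hub : ∀ᶠ r : ℕ in atTop,
      (1 / (r : ℝ)) * Real.log (MP P r (t r)) ≤ g r := by
    filter_upwards [eventually_ge_atTop 1] with r hr
    have hrpos : (0:ℝ) < r := by exact_mod_cast hr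
    have hlog : Real.log (MP P r (t r)) ≤
        Real.log r + ((t r : ℝ) + 1) * A + (t r : ℝ) * B + ((r:ℝ) - 1) * C := by
      have h2 := Real.log_le_log (hMP_pos r hr (t r)) (hMP_le r hr (t r))
      rw [Real.log_mul (by positivity) (by positivity),
          Real.log_mul (by positivity) (by positivity),
          Real.log_mul (by positivity) (by positivity),
          Real.log_pow, Real.log_pow, Real.log_pow] at h2
      have hcast : ((r - 1 : ℕ) : ℝ) = (r:ℝ) - 1 := by
        rw [Nat.cast_sub hr, Nat.cast_one]
      rw [hcast] at h2
      calc Real.log (MP P r (t r)) ≤ _ := h2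
        _ = Real.log r + ((t r : ℝ) + 1) * A + (t r : ℝ) * B + ((r:ℝ) - 1) * C := by
            push_cast; ring
    calc (1 / (r : ℝ)) * Real.log (MP P r (t r))
        ≤ (1 / (r : ℝ)) * (Real.log r + ((t r : ℝ) + 1) * A + (t r : ℝ) * B + ((r:ℝ) - 1) * C) :=
          mul_le_mul_of_nonneg_left hlog (by positivity)
      _ = g r := by rw [hg_def]; field_simp
  -- t r / r → 1/v
  have htr : Tendsto (fun r : ℕ => (t r : ℝ) / r) atTop (nhds (1 / v)) := by
    have hlo : Tendsto (fun r : ℕ => 1 / v - 1 / (r:ℝ)) atTop (nhds (1 / v)) := by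
      simpa using (tendsto_const_nhds : Tendsto (fun _ : ℕ => 1 / v) atTop (nhds (1 / v))).sub tendsto_one_div_atTop_nhds_zero_nat
    apply tendsto_of_tendsto_of_tendsto_of_le_of_le' hlo tendsto_const_nhds
    · filter_upwards [eventually_ge_atTop 1] with r hr
      have hrpos : (0:ℝ) < r := by exact_mod_cast hr
      have h := (Nat.sub_one_lt_floor ((r:ℝ) / v)).le
      calc 1 / v - 1 / (r:ℝ) = ((r:ℝ) / v - 1) / r := by field_simp
        _ ≤ (t r : ℝ) / r := div_le_div_of_nonneg_right h hrpos.le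
    · filter_upwards [eventually_ge_atTop 1] with r hr
      have hrpos : (0:ℝ) < r := by exact_mod_cast hr
      have h := Nat.floor_le (by positivity : (0:ℝ) ≤ (r:ℝ) / v)
      calc (t r : ℝ) / r ≤ ((r:ℝ) / v) / r := div_le_div_of_nonneg_right h hrpos.le
        _ = 1 / v := by field_simp
  -- log r / r → 0
  have hlogr : Tendsto (fun r : ℕ => Real.log r / r) atTop (nhds 0) := by
    have h := Real.tendsto_pow_log_div_mul_add_atTop 1 0 1 one_ne_zero
    simp only [pow_one, one_mul, add_zero] at h
    exact h.comp tendsto_natCast_atTop_atTop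
  -- 1/r → 0
  have hinv : Tendsto (fun r : ℕ => 1 / (r:ℝ)) atTop (nhds 0) :=
    tendsto_one_div_atTop_nhds_zero_nat
  -- (r-1)/r → 1
  have hrm1 : Tendsto (fun r : ℕ => ((r:ℝ) - 1) / r) atTop (nhds 1) := by
    have h : Tendsto (fun r : ℕ => 1 - 1 / (r:ℝ)) atTop (nhds 1) := by
      simpa using tendsto_const_nhds.sub hinv
    apply h.congr'
    filter_upwards [eventually_ge_atTop 1] with r hr
    have hrpos : (0:ℝ) < r := by exact_mod_cast hr
    field_simp
  -- g converges
  have hgL : Tendsto g atTop (nhds (0 + (1/v + 0) * A + (1/v) * B + 1 * C)) := by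
    rw [hg_def]
    refine ((hlogr.add (((htr.add hinv).congr ?_).mul_const A)).add
      (htr.mul_const B)).add (hrm1.mul_const C)
    intro r
    have : ((t r : ℝ) + 1) / r = (t r : ℝ) / r + 1 / r := by ring
    exact this.symm
  -- identify the limit with the RHS
  have hval : 0 + (1/v + 0) * A + (1/v) * B + 1 * C
      = -(((1 + v) / v) * klBin w p) := by
    rw [klBin, hA_def, hB_def, hC_def,
        Real.log_div (ne_of_gt hw0) (ne_of_gt hp0),
        Real.log_div (ne_of_gt h1w) (ne_of_gt h1p),
        Real.log_div (ne_of_gt hp0) (ne_of_gt hw0),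
        Real.log_inv, hw_def]
    field_simp
    ring
  -- conclude
  have hcob : IsCoboundedUnder (· ≤ ·) atTop
      (fun r : ℕ => (1 / (r : ℝ)) * Real.log (MP P r ⌊(r : ℝ) / v⌋₊)) := by
    apply isCoboundedUnder_le_of_eventually_le atTop (x := (1/v + 1) * A)
    filter_upwards [eventually_ge_atTop 1] with r hr
    have hrpos : (0:ℝ) < r := by exact_mod_cast hr
    have hMlow : (1 - p) ^ (t r + 1) ≤ MP P r (t r) := by
      rw [MP, ← hp_def]
      nth_rewrite 1 [← mul_one ((1 - p) ^ (t r + 1))]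
      exact mul_le_mul_of_nonneg_left (hsum_ge r hr (t r)) (by positivity)
    have hlog : ((t r : ℝ) + 1) * A ≤ Real.log (MP P r (t r)) := by
      have := Real.log_le_log (by positivity) hMlow
      rwa [Real.log_pow, Nat.cast_add, Nat.cast_one] at this
    have hAneg : A ≤ 0 := Real.log_nonpos (by linarith) (by linarith)
    have htle : (t r : ℝ) ≤ (r:ℝ) / v := Nat.floor_le (by positivity)
    have h1 : ((t r : ℝ) + 1) / r ≤ 1/v + 1 := by
      rw [div_le_iff₀ hrpos]
      have : (1:ℝ) ≤ r := by exact_mod_cast hr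
      have hrv : (r:ℝ) / v = r * (1/v) := by ring
      nlinarith [htle]
    calc (1/v + 1) * A ≤ (((t r : ℝ) + 1) / r) * A := by
          apply mul_le_mul_of_nonpos_right h1 hAneg
      _ = (1 / (r:ℝ)) * (((t r : ℝ) + 1) * A) := by ring
      _ ≤ (1 / (r:ℝ)) * Real.log (MP P r (t r)) :=
          mul_le_mul_of_nonneg_left hlog (by positivity)
  calc Filter.limsup (fun r : ℕ => (1 / (r : ℝ)) * Real.log (MP P r ⌊(r : ℝ) / v⌋₊)) atTop
      ≤ Filter.limsup g atTop := limsup_le_limsup hub hcob hgL.isBoundedUnder_le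
    _ = 0 + (1/v + 0) * A + (1/v) * B + 1 * C := hgL.limsup_eq
    _ = -(((1 + v) / v) * klBin w p) := hval
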